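/- If a permutation p of {1,...,n} has some entry strictly between the positions of the values 1 and 2, then p has a peak at some position strictly between the positions of 1 and 2 (inclusive of the interior). -/

import Mathlib

/-- One step-by-step implementation of the `SC_231` stack-sorting machine.
`sc231Aux input stack out`: the next input entry is pushed onto the stack unless
pushing it would create a consecutive occurrence of the pattern `231` read from
top to bottom among the stack entries (i.e. the incoming `x` on top of `y`, `z`
with `z < x < y`), in which case the top of the stack is popped and appended to
the output; once the input is exhausted the remaining stack entries are popped. -/
def sc231Aux : List ℕ → List ℕ → List ℕ → List ℕ
  | [], stack, out => out ++ stack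
  | x :: rest, y :: z :: s, out =>
      if z < x ∧ x < y then sc231Aux (x :: rest) (z :: s) (out ++ [y])
      else sc231Aux rest (x :: y :: z :: s) out
  | x :: rest, stack, out => sc231Aux rest (x :: stack) out
termination_by input stack _ => 2 * input.length + stack.length
decreasing_by all_goals (simp; try omega)

/-- The consecutive-pattern-avoiding stack sort map `SC_231`. -/
def SC231 (p : List ℕ) : List ℕ := sc231Aux p [] []

/-- The list of entries that are *pre-popped* while `SC_231` processes the
input, i.e. popped while input entries still remain. -/
def prePopsAux : List ℕ → List ℕ → List ℕ
  | [], _ => []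
  | x :: rest, y :: z :: s =>
      if z < x ∧ x < y then y :: prePopsAux (x :: rest) (z :: s)
      else prePopsAux rest (x :: y :: z :: s)
  | x :: rest, stack => prePopsAux rest (x :: stack)
termination_by input stack => 2 * input.length + stack.length
decreasing_by all_goals (simp; try omega)

def prePops (p : List ℕ) : List ℕ := prePopsAux p []

/-- `p` has a peak: an interior position whose entry exceeds both neighbours. -/
def HasPeak (p : List ℕ) : Prop :=
  ∃ i, i + 2 < p.length ∧ p[i]! < p[i+1]! ∧ p[i+2]! < p[i+1]!

/-- `p` is a permutation of `{1, …, n}` (written as a list of its entries). -/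
def IsPermOf (n : ℕ) (p : List ℕ) : Prop := p.Perm (List.range' 1 n)

/-- `p` contains the (classical) pattern `q`. -/
def ContainsPat (p q : List ℕ) : Prop :=
  ∃ s : List ℕ, s.Sublist p ∧ s.length = q.length ∧
    ∀ i j, i < s.length → j < s.length → (s[i]! < s[j]! ↔ q[i]! < q[j]!)

def AvoidsPat (p q : List ℕ) : Prop := ¬ ContainsPat p q

/-- The sort-number of `p`: the least `k` with `SC_231^k(p)` peakless. -/
noncomputable def sortNum (p : List ℕ) : ℕ := sInf {k | ¬ HasPeak (SC231^[k] p)}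

/-- If some entry lies strictly between the positions of the values `1` and `2` in a
permutation `p` of `{1,…,n}`, then `p` has a peak at a position strictly between the
positions of `1` and `2`. -/
theorem peak_between_one_and_two (n : ℕ) (hn : 2 ≤ n) (p : List ℕ) (hp : IsPermOf n p)
    (h : min (p.idxOf 1) (p.idxOf 2) + 1 < max (p.idxOf 1) (p.idxOf 2)) :
    ∃ j, min (p.idxOf 1) (p.idxOf 2) < j ∧ j < max (p.idxOf 1) (p.idxOf 2) ∧
      0 < j ∧ j + 1 < p.length ∧ p[j-1]! < p[j]! ∧ p[j+1]! < p[j]! := by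
  classical
  have hnd : p.Nodup := hp.symm.nodup (List.nodup_range' (s := 1) (n := n) (h := Nat.one_pos))
  have h1m : (1:ℕ) ∈ p := hp.mem_iff.mpr (List.mem_range'.mpr ⟨0, by omega, by omega⟩)
  have h2m : (2:ℕ) ∈ p := hp.mem_iff.mpr (List.mem_range'.mpr ⟨1, by omega, by omega⟩)
  have hl1 : p.idxOf 1 < p.length := List.idxOf_lt_length_iff.mpr h1m
  have hl2 : p.idxOf 2 < p.length := List.idxOf_lt_length_iff.mpr h2m
  have hg1 : p[p.idxOf 1]'hl1 = 1 := List.getElem_idxOf hl1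
  have hg2 : p[p.idxOf 2]'hl2 = 2 := List.getElem_idxOf hl2
  set a := min (p.idxOf 1) (p.idxOf 2) with ha
  set b := max (p.idxOf 1) (p.idxOf 2) with hb
  have hbl : b < p.length := by rcases max_cases (p.idxOf 1) (p.idxOf 2) with ⟨h', _⟩|⟨h', _⟩ <;> omega
  -- interior entries are ≥ 3
  have hval : ∀ k (hk : k < p.length), k ≠ p.idxOf 1 → k ≠ p.idxOf 2 → 3 ≤ p[k]'hk := by
    intro k hk hk1 hk2
    have hmem : p[k]'hk ∈ p := List.getElem_mem hk
    have : p[k]'hk ∈ List.range' 1 n := hp.mem_iff.mp hmem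
    have hge : 1 ≤ p[k]'hk := by obtain ⟨i, _, hi⟩ := List.mem_range'.mp this; omega
    have hne1 : p[k]'hk ≠ 1 := by
      intro he
      exact hk1 ((List.Nodup.getElem_inj_iff hnd).mp (by rw [he, hg1]))
    have hne2 : p[k]'hk ≠ 2 := by
      intro he
      exact hk2 ((List.Nodup.getElem_inj_iff hnd).mp (by rw [he, hg2]))
    omega
  -- choose j in (a,b) with maximal value
  obtain ⟨j, hjmem, hjmax⟩ := Finset.exists_max_image (Finset.Ioo a b) (fun k => p[k]!)
    ⟨a+1, by simp [Finset.mem_Ioo]; omega⟩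
  simp only [Finset.mem_Ioo] at hjmem
  obtain ⟨haj, hjb⟩ := hjmem
  have hjl : j < p.length := lt_trans hjb hbl
  have hjne1 : j ≠ p.idxOf 1 := by
    rcases min_cases (p.idxOf 1) (p.idxOf 2) with ⟨h', _⟩|⟨h', _⟩ <;>
      rcases max_cases (p.idxOf 1) (p.idxOf 2) with ⟨h'', _⟩|⟨h'', _⟩ <;> omega
  have hjne2 : j ≠ p.idxOf 2 := by
    rcases min_cases (p.idxOf 1) (p.idxOf 2) with ⟨h', _⟩|⟨h', _⟩ <;>
      rcases max_cases (p.idxOf 1) (p.idxOf 2) with ⟨h'', _⟩|⟨h'', _⟩ <;> omega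
  have hj3 : 3 ≤ p[j]'hjl := hval j hjl hjne1 hjne2
  have hab2 : p[a]! ≤ 2 := by
    rcases min_cases (p.idxOf 1) (p.idxOf 2) with ⟨h', _⟩|⟨h', _⟩
    · rw [ha, h', getElem!_pos p _ hl1, hg1]; omega
    · rw [ha, h', getElem!_pos p _ hl2, hg2]
  have hbb2 : p[b]! ≤ 2 := by
    rcases max_cases (p.idxOf 1) (p.idxOf 2) with ⟨h', _⟩|⟨h', _⟩
    · rw [hb, h', getElem!_pos p _ hl1, hg1]; omega
    · rw [hb, h', getElem!_pos p _ hl2, hg2]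
  refine ⟨j, haj, hjb, by omega, by omega, ?_, ?_⟩
  · -- left neighbour
    have hjm1l : j - 1 < p.length := by omega
    rcases eq_or_lt_of_le (Nat.succ_le_of_lt haj) with he | hlt
    · -- j = a + 1, so j - 1 = a
      have : j - 1 = a := by omega
      rw [this, getElem!_pos p j hjl]
      omega
    · have hmem : j - 1 ∈ Finset.Ioo a b := by simp [Finset.mem_Ioo]; omega
      have hle := hjmax _ hmem
      have hne : p[j-1]! ≠ p[j]! := by
        rw [getElem!_pos p (j-1) hjm1l, getElem!_pos p j hjl]
        intro he
        have := (List.Nodup.getElem_inj_iff hnd).mp he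
        omega
      omega
  · -- right neighbour
    rcases eq_or_lt_of_le (Nat.succ_le_of_lt hjb) with he | hlt
    · have he' : j + 1 = b := he
      rw [he', getElem!_pos p j hjl]; omega
    · have hmem : j + 1 ∈ Finset.Ioo a b := by simp [Finset.mem_Ioo]; omega
      have hle := hjmax _ hmem
      have hne : p[j+1]! ≠ p[j]! := by
        rw [getElem!_pos p (j+1) (by omega), getElem!_pos p j hjl]
        intro he
        have := (List.Nodup.getElem_inj_iff hnd).mp he
        omega
      omega
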